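/- Let T be a subring of a ring R containing an essential left ideal L of R with right annihilator of L equal to zero. Then the uniform (Goldie) dimension of T as a left T-module equals the uniform dimension of R as a left R-module. -/

import Mathlib

universe u v

/-- The left annihilator of the set `L` in `S` is zero. -/
def LAnnZero (S : Type u) [Ring S] (L : Set S) : Prop :=
  ∀ a : S, (∀ x ∈ L, a * x = 0) → a = 0

/-- The right annihilator of the set `L` in `S` is zero. -/
def RAnnZero (S : Type u) [Ring S] (L : Set S) : Prop :=
  ∀ a : S, (∀ x ∈ L, x * a = 0) → a = 0

/-- A left ideal is essential: it meets every nonzero left ideal nontrivially. -/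
def IsEssentialLeftIdeal {S : Type u} [Ring S] (L : Ideal S) : Prop :=
  ∀ I : Ideal S, I ≠ ⊥ → L ⊓ I ≠ ⊥

/-- A (possibly noncommutative) ring is semiprime: `aRa = 0` implies `a = 0`. -/
def IsSemiprimeRing (S : Type u) [Ring S] : Prop :=
  ∀ a : S, (∀ r : S, a * r * a = 0) → a = 0

/-- A (possibly noncommutative) ring is prime: it is nonzero and `aRb = 0`
implies `a = 0` or `b = 0`. -/
def IsPrimeRingE (S : Type u) [Ring S] : Prop :=
  Nontrivial S ∧ ∀ a b : S, (∀ r : S, a * r * b = 0) → a = 0 ∨ b = 0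

/-- `a` is left regular: its left annihilator is zero. -/
def LeftReg {S : Type u} [Ring S] (a : S) : Prop := ∀ x : S, x * a = 0 → x = 0

/-- `a` is right regular: its right annihilator is zero. -/
def RightReg {S : Type u} [Ring S] (a : S) : Prop := ∀ x : S, a * x = 0 → x = 0

/-- `a` is regular: neither a left nor a right zero divisor. -/
def Reg {S : Type u} [Ring S] (a : S) : Prop := LeftReg a ∧ RightReg a

/-- A self-map of a ring has large image: its range contains an essential
left ideal with zero right annihilator. -/
def HasLargeImage {S : Type u} [Ring S] (f : S → S) : Prop :=
  ∃ L : Ideal S, IsEssentialLeftIdeal L ∧ RAnnZero S (L : Set S) ∧ (L : Set S) ⊆ Set.range f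

/-- The left annihilator of a set, as a left ideal. -/
def lAnnIdeal (S : Type u) [Ring S] (X : Set S) : Ideal S where
  carrier := {a | ∀ x ∈ X, a * x = 0}
  add_mem' := by intro a b ha hb x hx; rw [add_mul, ha x hx, hb x hx, add_zero]
  zero_mem' := by intro x hx; rw [zero_mul]
  smul_mem' := by intro r a ha x hx; simp only [smul_eq_mul, mul_assoc, ha x hx, mul_zero]

/-- ACC on left annihilator ideals. -/
def AccLeftAnn (S : Type u) [Ring S] : Prop :=
  ∀ X : ℕ → Set S, (∀ n, lAnnIdeal S (X n) ≤ lAnnIdeal S (X (n + 1))) →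
    ∃ N, ∀ m, N ≤ m → lAnnIdeal S (X m) = lAnnIdeal S (X N)

/-- Finite uniform (Goldie) dimension on the left: no infinite independent
family of nonzero left ideals. -/
def FinUdim (S : Type u) [Ring S] : Prop :=
  ¬ ∃ f : ℕ → Ideal S, (∀ n, f n ≠ ⊥) ∧ iSupIndep f

/-- Left Goldie ring: ACC on left annihilators and finite left uniform dimension. -/
def IsLeftGoldie (S : Type u) [Ring S] : Prop := AccLeftAnn S ∧ FinUdim S

/-- The left uniform (Goldie) dimension of `S` is at least `n`. -/
def UdimGE (S : Type u) [Ring S] (n : ℕ) : Prop :=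
  ∃ f : Fin n → Ideal S, (∀ i, f i ≠ ⊥) ∧ iSupIndep f

/-- `ι : R →+* Q` realizes `Q` as a classical left quotient ring of `R`:
`ι` is injective, regular elements become units, and every element of `Q`
is a left fraction `(ι s)⁻¹ * (ι a)` with `s` regular. -/
structure IsLeftQuotRing {R : Type u} {Q : Type v} [Ring R] [Ring Q] (ι : R →+* Q) : Prop where
  inj : Function.Injective ι
  unit : ∀ a : R, Reg a → IsUnit (ι a)
  frac : ∀ q : Q, ∃ a s : R, Reg s ∧ ι s * q = ι a

/-- An ideal (a priori only a left ideal) is two-sided. -/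
def IsTwoSided {S : Type u} [Ring S] (I : Ideal S) : Prop := ∀ x ∈ I, ∀ r : S, x * r ∈ I

/-- ACC on two-sided ideals. -/
def AccTwoSided (S : Type u) [Ring S] : Prop :=
  ∀ f : ℕ → Ideal S, (∀ n, IsTwoSided (f n)) → (∀ n, f n ≤ f (n + 1)) →
    ∃ N, ∀ m, N ≤ m → f m = f N

/-- A trivially ordered set: no strict comparabilities. -/
def TrivOrd (P : Type u) [Preorder P] : Prop := ∀ x y : P, ¬ x < y

/-- `DevLE α P` : the deviation (in the sense of Gabriel–Rentschler) of the
poset `P` is at most `α` (where trivially ordered intervals count as having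
deviation `-∞`). -/
def DevLE (α : Ordinal.{v}) (P : Type u) [Preorder P] : Prop :=
  ∀ f : ℕ → P, (∀ n, f (n + 1) ≤ f n) →
    ∃ N : ℕ, ∀ n, N ≤ n →
      TrivOrd ↥(Set.Icc (f (n + 1)) (f n)) ∨
      ∃ β, ∃ _ : β < α, DevLE β ↥(Set.Icc (f (n + 1)) (f n))
termination_by α

/-- `R` has left Krull dimension in the sense of Gabriel–Rentschler: the
poset of left ideals of `R` has deviation. -/
def HasLeftKrullDim (R : Type u) [Ring R] : Prop :=
  ∃ α : Ordinal.{u}, DevLE α (Ideal R)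

/-- `(A, ι, τ)` is a Cohn–Jordan extension of `(R, σ)`: `ι : R → A` is an
injective embedding, the automorphism `τ` of `A` extends `σ`, and every
element of `A` is mapped into `R` by some positive power of `τ`. -/
structure IsCohnJordan {R A : Type u} [Ring R] [Ring A] (σ : R →+* R) (ι : R →+* A)
    (τ : A ≃+* A) : Prop where
  inj : Function.Injective ι
  comm : ∀ r : R, τ (ι r) = ι (σ r)
  small : ∀ a : A, ∃ n : ℕ, 1 ≤ n ∧ (⇑τ)^[n] a ∈ Set.range ι

/-- If a subring `T` of `R` contains an essential left ideal `L` of `R` with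
zero right annihilator, then the left uniform (Goldie) dimension of `T`
equals that of `R`. -/
theorem stmt7 {R : Type u} [Ring R] (T : Subring R) (L : Ideal R)
    (hLT : (L : Set R) ⊆ (T : Set R)) (hess : IsEssentialLeftIdeal L)
    (hr : RAnnZero R (L : Set R)) :
    ∀ n : ℕ, UdimGE ↥T n ↔ UdimGE R n := by
  intro n
  constructor
  · -- T → R
    rintro ⟨g, hg0, hgi⟩
    -- generating sets
    set X : Fin n → Set R := fun i => {z | ∃ l ∈ L, ∃ t ∈ g i, z = l * (t : R)} with hX
    have hXsmul : ∀ (i : Fin n) (r : R) {z : R}, z ∈ X i → r * z ∈ X i := by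
      rintro i r z ⟨l, hl, t, ht, rfl⟩
      exact ⟨r * l, L.smul_mem r hl, t, ht, (mul_assoc r l t).symm⟩
    have hclsmul : ∀ (i : Fin n) (r : R) {z : R},
        z ∈ AddSubgroup.closure (X i) → r * z ∈ AddSubgroup.closure (X i) := by
      intro i r z hz
      induction hz using AddSubgroup.closure_induction with
      | mem x hx => exact AddSubgroup.subset_closure (hXsmul i r hx)
      | zero => simpa using (AddSubgroup.closure (X i)).zero_mem
      | add x y _ _ hx hy => rw [mul_add]; exact add_mem hx hy
      | neg x _ hx => rw [mul_neg]; exact neg_mem hx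
    set f : Fin n → Ideal R := fun i =>
      { carrier := AddSubgroup.closure (X i)
        add_mem' := fun h1 h2 => add_mem h1 h2
        zero_mem' := zero_mem _
        smul_mem' := fun r z hz => hclsmul i r hz } with hfdef
    have hmemf : ∀ (i : Fin n) (z : R), z ∈ f i ↔ z ∈ AddSubgroup.closure (X i) :=
      fun i z => Iff.rfl
    set B : Fin n → AddSubgroup R := fun j =>
      AddSubgroup.map T.subtype.toAddMonoidHom (g j).toAddSubgroup with hB
    have hXB : ∀ i, X i ⊆ B i := by
      rintro i z ⟨l, hl, t, ht, rfl⟩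
      refine ⟨(⟨l, hLT hl⟩ : ↥T) * t, (g i).smul_mem ⟨l, hLT hl⟩ ht, rfl⟩
    have hfB : ∀ i, ∀ z ∈ f i, z ∈ B i := by
      intro i z hz
      exact AddSubgroup.closure_le (B i) |>.mpr (hXB i) hz
    refine ⟨f, ?_, ?_⟩
    · intro i hbot
      obtain ⟨t, ht, ht0⟩ := Submodule.ne_bot_iff (g i) |>.mp (hg0 i)
      have htR : (t : R) ≠ 0 := fun h => ht0 (Subtype.ext h)
      have : ¬ ∀ l ∈ L, l * (t : R) = 0 := fun h => htR (hr _ h)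
      push_neg at this
      obtain ⟨l, hl, hlt⟩ := this
      have : l * (t : R) ∈ f i := AddSubgroup.subset_closure ⟨l, hl, t, ht, rfl⟩
      rw [hbot] at this
      exact hlt (Submodule.mem_bot R |>.mp this)
    · rw [iSupIndep_def]
      intro i
      rw [Submodule.disjoint_def]
      intro z hzi hzsup
      -- z ∈ B i
      obtain ⟨t, ht, htz⟩ := hfB i z hzi
      -- z comes from the sup of the g j, j ≠ i
      have key : ∃ w : ↥T, w ∈ (⨆ j, ⨆ _ : j ≠ i, g j) ∧ (w : R) = z := by
        rw [iSup_subtype'] at hzsup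
        refine Submodule.iSup_induction _
          (motive := fun z => ∃ w : ↥T, w ∈ (⨆ j, ⨆ _ : j ≠ i, g j) ∧ (w : R) = z) hzsup
          ?_ ⟨0, zero_mem _, by simp⟩ ?_
        · intro j x hx
          obtain ⟨w, hw, hwx⟩ := hfB j x hx
          exact ⟨w, Submodule.mem_iSup_of_mem j.1 (Submodule.mem_iSup_of_mem j.2 hw), hwx⟩
        · rintro x y ⟨w1, hw1, hw1x⟩ ⟨w2, hw2, hw2y⟩
          refine ⟨w1 + w2, add_mem hw1 hw2, ?_⟩
          push_cast
          rw [hw1x, hw2y]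
      obtain ⟨w, hw, hwz⟩ := key
      have htz' : (t : R) = z := htz
      have htw : t = w := Subtype.ext (by rw [htz', hwz])
      have : t = 0 := Submodule.disjoint_def.mp (hgi i) t ht (htw ▸ hw)
      rw [← htz', this]; rfl
  · -- R → T
    rintro ⟨f, hf0, hfi⟩
    set g : Fin n → Ideal ↥T := fun i => Ideal.comap T.subtype (L ⊓ f i) with hg
    refine ⟨g, ?_, ?_⟩
    · intro i hbot
      obtain ⟨x, hx, hx0⟩ := Submodule.ne_bot_iff _ |>.mp (hess (f i) (hf0 i))
      have hxT : x ∈ T := hLT (Submodule.mem_inf.mp hx).1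
      have : (⟨x, hxT⟩ : ↥T) ∈ g i := by
        rw [hg]; exact Ideal.mem_comap.mpr hx
      rw [hbot] at this
      exact hx0 (congrArg Subtype.val (Submodule.mem_bot _ |>.mp this))
    · rw [iSupIndep_def]
      intro i
      rw [Submodule.disjoint_def]
      intro w hwi hwsup
      have hsup_le : (⨆ j, ⨆ _ : j ≠ i, g j) ≤ Ideal.comap T.subtype (⨆ j, ⨆ _ : j ≠ i, (L ⊓ f j)) := by
        refine iSup_le fun j => iSup_le fun hj => Ideal.comap_mono ?_
        exact le_iSup_of_le j (le_iSup_of_le hj le_rfl)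
      have h1 : (w : R) ∈ L ⊓ f i := Ideal.mem_comap.mp hwi
      have h2 : (w : R) ∈ (⨆ j, ⨆ _ : j ≠ i, (L ⊓ f j) : Ideal R) :=
        Ideal.mem_comap.mp (hsup_le hwsup)
      have h3 : (w : R) ∈ (⨆ j, ⨆ _ : j ≠ i, f j : Ideal R) := by
        refine (iSup_le fun j => iSup_le fun hj => ?_ :
          (⨆ j, ⨆ _ : j ≠ i, (L ⊓ f j)) ≤ ⨆ j, ⨆ _ : j ≠ i, f j) h2
        exact le_iSup_of_le j (le_iSup_of_le hj inf_le_right)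
      have : (w : R) = 0 :=
        Submodule.disjoint_def.mp (iSupIndep_def.mp hfi i) _ h1.2 h3
      exact Subtype.ext this
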